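/- arXiv:2403.18527 — 5 statements merged into one kernel-verified Lean document; each statement's English description precedes it below -/
import Mathlib

section
/- Let 0 < c₁ ≤ c₂ and C ≥ 0, and define ℓ : [0,∞) → ℝ by ℓ(t) = ½(√(t + c₁) + √(t + c₂) − C)². Then for every t ≥ 0, 2·t·ℓ''(t) + ℓ'(t) ≤ ½(3 + √(c₂/c₁)). -/
lemma aux0 (c x : ℝ) (h : 0 < x + c) :
    HasDerivAt (fun y => Real.sqrt (y + c)) (1 / (2 * Real.sqrt (x + c))) x := by
  have := (Real.hasDerivAt_sqrt (ne_of_gt h)).comp x ((hasDerivAt_id x).add_const c)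
  simpa [Function.comp_def] using this

lemma aux1 (c x : ℝ) (h : 0 < x + c) :
    HasDerivAt (fun y => 1 / (2 * Real.sqrt (y + c)))
      (-(1 / (4 * (x + c) * Real.sqrt (x + c)))) x := by
  have hs : 0 < Real.sqrt (x + c) := Real.sqrt_pos.2 h
  have h2 : (2 * Real.sqrt (x + c)) ≠ 0 := by positivity
  have := ((aux0 c x h).const_mul 2).inv h2
  have hsq : Real.sqrt (x + c) ^ 2 = x + c := Real.sq_sqrt h.le
  have hfun : (fun y => 1 / (2 * Real.sqrt (y + c))) = (fun y => 2 * Real.sqrt (y + c))⁻¹ := by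
    ext y; simp [one_div]
  rw [hfun]
  refine this.congr_deriv ?_
  rw [← hsq]
  field_simp
  rw [Real.sqrt_sq hs.le]
  ring

-- first derivative of ℓ
lemma auxL (c₁ c₂ C : ℝ) (x : ℝ) (h1 : 0 < x + c₁) (h2 : 0 < x + c₂) :
    HasDerivAt (fun t => (1 / 2) * (Real.sqrt (t + c₁) + Real.sqrt (t + c₂) - C) ^ 2)
      ((Real.sqrt (x + c₁) + Real.sqrt (x + c₂) - C) *
        (1 / (2 * Real.sqrt (x + c₁)) + 1 / (2 * Real.sqrt (x + c₂)))) x := by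
  have hf : HasDerivAt (fun t => Real.sqrt (t + c₁) + Real.sqrt (t + c₂) - C)
      (1 / (2 * Real.sqrt (x + c₁)) + 1 / (2 * Real.sqrt (x + c₂))) x :=
    ((aux0 c₁ x h1).add (aux0 c₂ x h2)).sub_const C
  have := (hf.pow 2).const_mul (1/2 : ℝ)
  refine this.congr_deriv ?_
  ring

-- second derivative expression: derivative of D
lemma auxD (c₁ c₂ C : ℝ) (x : ℝ) (h1 : 0 < x + c₁) (h2 : 0 < x + c₂) :
    HasDerivAt (fun t => (Real.sqrt (t + c₁) + Real.sqrt (t + c₂) - C) *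
        (1 / (2 * Real.sqrt (t + c₁)) + 1 / (2 * Real.sqrt (t + c₂))))
      ((1 / (2 * Real.sqrt (x + c₁)) + 1 / (2 * Real.sqrt (x + c₂))) ^ 2 +
        (Real.sqrt (x + c₁) + Real.sqrt (x + c₂) - C) *
          (-(1 / (4 * (x + c₁) * Real.sqrt (x + c₁))) +
           -(1 / (4 * (x + c₂) * Real.sqrt (x + c₂))))) x := by
  have hf : HasDerivAt (fun t => Real.sqrt (t + c₁) + Real.sqrt (t + c₂) - C)
      (1 / (2 * Real.sqrt (x + c₁)) + 1 / (2 * Real.sqrt (x + c₂))) x :=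
    ((aux0 c₁ x h1).add (aux0 c₂ x h2)).sub_const C
  have hg : HasDerivAt (fun t => 1 / (2 * Real.sqrt (t + c₁)) + 1 / (2 * Real.sqrt (t + c₂)))
      (-(1 / (4 * (x + c₁) * Real.sqrt (x + c₁))) +
       -(1 / (4 * (x + c₂) * Real.sqrt (x + c₂)))) x :=
    (aux1 c₁ x h1).add (aux1 c₂ x h2)
  have := hf.mul hg
  refine this.congr_deriv ?_
  ring

set_option maxHeartbeats 1000000 in
theorem stmt_4 (c₁ c₂ C : ℝ) (hc₁ : 0 < c₁) (hc₂ : c₁ ≤ c₂) (hC : 0 ≤ C)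
    (ℓ : ℝ → ℝ)
    (hℓ : ℓ = fun t => (1 / 2) * (Real.sqrt (t + c₁) + Real.sqrt (t + c₂) - C) ^ 2) :
    ∀ t : ℝ, 0 ≤ t →
      2 * t * deriv (deriv ℓ) t + deriv ℓ t ≤ (1 / 2) * (3 + Real.sqrt (c₂ / c₁)) := by
  intro t ht
  have h1 : 0 < t + c₁ := by linarith
  have h2 : 0 < t + c₂ := by linarith
  have hd1 : deriv ℓ t = (Real.sqrt (t + c₁) + Real.sqrt (t + c₂) - C) *
      (1 / (2 * Real.sqrt (t + c₁)) + 1 / (2 * Real.sqrt (t + c₂))) := by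
    rw [hℓ]; exact (auxL c₁ c₂ C t h1 h2).deriv
  have hev : deriv ℓ =ᶠ[nhds t] (fun x => (Real.sqrt (x + c₁) + Real.sqrt (x + c₂) - C) *
      (1 / (2 * Real.sqrt (x + c₁)) + 1 / (2 * Real.sqrt (x + c₂)))) := by
    filter_upwards [Ioi_mem_nhds (show -c₁ < t by linarith)] with x hx
    have hx1 : 0 < x + c₁ := by simp only [Set.mem_Ioi] at hx; linarith
    have hx2 : 0 < x + c₂ := by linarith
    rw [hℓ]; exact (auxL c₁ c₂ C x hx1 hx2).deriv
  have hd2 : deriv (deriv ℓ) t =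
      (1 / (2 * Real.sqrt (t + c₁)) + 1 / (2 * Real.sqrt (t + c₂))) ^ 2 +
        (Real.sqrt (t + c₁) + Real.sqrt (t + c₂) - C) *
          (-(1 / (4 * (t + c₁) * Real.sqrt (t + c₁))) +
           -(1 / (4 * (t + c₂) * Real.sqrt (t + c₂)))) := by
    rw [hev.deriv_eq]; exact (auxD c₁ c₂ C t h1 h2).deriv
  rw [hd1, hd2]
  have hc₂0 : 0 < c₂ := lt_of_lt_of_le hc₁ hc₂
  set s₁ := Real.sqrt (t + c₁) with hs₁def
  set s₂ := Real.sqrt (t + c₂) with hs₂def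
  set S := Real.sqrt (c₂ / c₁) with hSdef
  have hs1p : 0 < s₁ := Real.sqrt_pos.2 h1
  have hs2p : 0 < s₂ := Real.sqrt_pos.2 h2
  have hs1 : s₁ ^ 2 = t + c₁ := Real.sq_sqrt h1.le
  have hs2 : s₂ ^ 2 = t + c₂ := Real.sq_sqrt h2.le
  have hle : s₁ ≤ s₂ := Real.sqrt_le_sqrt (by linarith)
  have hSs : s₂ ≤ S * s₁ := by
    have hq : t + c₂ ≤ c₂ / c₁ * (t + c₁) := by
      rw [div_mul_eq_mul_div, le_div_iff₀ hc₁]; nlinarith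
    calc s₂ ≤ Real.sqrt (c₂ / c₁ * (t + c₁)) := Real.sqrt_le_sqrt hq
    _ = S * s₁ := Real.sqrt_mul (div_nonneg hc₂0.le hc₁.le) _
  clear_value s₁ s₂ S
  clear hs₁def hs₂def hSdef hd1 hd2 hev hℓ
  have hs1ne : s₁ ≠ 0 := ne_of_gt hs1p
  have hs2ne : s₂ ≠ 0 := ne_of_gt hs2p
  set A := 1 / (2 * s₁) + 1 / (2 * s₂) with hA
  set B := -(1 / (4 * (t + c₁) * s₁)) + -(1 / (4 * (t + c₂) * s₂)) with hB
  set f := s₁ + s₂ - C with hf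
  clear_value A B f
  have hP : 2 * t * B + A = c₁ / (2 * (t + c₁) * s₁) + c₂ / (2 * (t + c₂) * s₂) := by
    rw [hA, hB]; field_simp; ring
  have hPpos : 0 ≤ 2 * t * B + A := by
    rw [hP]
    have e1 : (0:ℝ) ≤ c₁ / (2 * (t + c₁) * s₁) :=
      div_nonneg hc₁.le (by nlinarith)
    have e2 : (0:ℝ) ≤ c₂ / (2 * (t + c₂) * s₂) :=
      div_nonneg hc₂0.le (by nlinarith)
    linarith
  have hfle : f ≤ s₁ + s₂ := by rw [hf]; linarith
  have step1 : 2 * t * (A ^ 2 + f * B) + f * A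
      = 2 * t * A ^ 2 + f * (2 * t * B + A) := by ring
  have step2 : f * (2 * t * B + A) ≤ (s₁ + s₂) * (2 * t * B + A) :=
    mul_le_mul_of_nonneg_right hfle hPpos
  have key1 : 2 * t * A ^ 2 + (s₁ + s₂) * (2 * t * B + A)
      = 1 + t / (s₁ * s₂) + c₁ * s₂ / (2 * s₁ ^ 3) + c₂ * s₁ / (2 * s₂ ^ 3) := by
    rw [hP, hA]
    have ht' : t = s₁ ^ 2 - c₁ := by linarith
    have hc2' : c₂ = s₂ ^ 2 - s₁ ^ 2 + c₁ := by linarith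
    rw [ht', hc2']
    field_simp
    ring
  have poly : 2 * t * s₁ ^ 2 * s₂ ^ 2 + c₁ * s₂ ^ 4 + c₂ * s₁ ^ 4
      ≤ s₁ ^ 3 * s₂ ^ 3 + s₁ ^ 2 * s₂ ^ 4 := by
    have e1 : c₁ = s₁ ^ 2 - t := by linarith
    have e2 : c₂ = s₂ ^ 2 - t := by linarith
    rw [e1, e2]
    nlinarith [mul_nonneg ht (sq_nonneg (s₂ ^ 2 - s₁ ^ 2)),
      mul_nonneg (mul_nonneg (pow_nonneg hs1p.le 3) (pow_nonneg hs2p.le 2))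
        (sub_nonneg.2 hle)]
  have frac : t / (s₁ * s₂) + c₁ * s₂ / (2 * s₁ ^ 3) + c₂ * s₁ / (2 * s₂ ^ 3)
      ≤ 1 / 2 + s₂ / (2 * s₁) := by
    rw [← sub_nonneg]
    have expand : 1 / 2 + s₂ / (2 * s₁) -
        (t / (s₁ * s₂) + c₁ * s₂ / (2 * s₁ ^ 3) + c₂ * s₁ / (2 * s₂ ^ 3))
        = (s₁ ^ 3 * s₂ ^ 3 + s₁ ^ 2 * s₂ ^ 4 -
            (2 * t * s₁ ^ 2 * s₂ ^ 2 + c₁ * s₂ ^ 4 + c₂ * s₁ ^ 4)) /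
          (2 * s₁ ^ 3 * s₂ ^ 3) := by
      field_simp
    rw [expand]
    refine div_nonneg (by linarith) ?_
    have : (0:ℝ) < 2 * s₁ ^ 3 * s₂ ^ 3 := by positivity
    linarith
  have hSfin : s₂ / (2 * s₁) ≤ S / 2 := by
    rw [div_le_div_iff₀ (by positivity) two_pos]; nlinarith
  calc 2 * t * (A ^ 2 + f * B) + f * A
      = 2 * t * A ^ 2 + f * (2 * t * B + A) := step1
    _ ≤ 2 * t * A ^ 2 + (s₁ + s₂) * (2 * t * B + A) := by linarith
    _ = 1 + t / (s₁ * s₂) + c₁ * s₂ / (2 * s₁ ^ 3) + c₂ * s₁ / (2 * s₂ ^ 3) := key1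
    _ ≤ 1 + (1 / 2 + s₂ / (2 * s₁)) := by linarith
    _ ≤ 1 + (1 / 2 + S / 2) := by linarith
    _ = (1 / 2) * (3 + S) := by ring
end

section
/- Let 0 < c₁ ≤ c₂, C ≥ 0, and ℓ(t) = ½(√(t + c₁) + √(t + c₂) − C)² for t ≥ 0. Then ℓ''(t) ≤ (C/4)·(1/(t+c₁)^{3/2} + 1/(t+c₂)^{3/2}) for all t ≥ 0. -/
theorem stmt_5 (c₁ c₂ C : ℝ) (hc₁ : 0 < c₁) (hc₂ : c₁ ≤ c₂) (hC : 0 ≤ C)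
    (ℓ : ℝ → ℝ)
    (hℓ : ℓ = fun t => (1 / 2) * (Real.sqrt (t + c₁) + Real.sqrt (t + c₂) - C) ^ 2) :
    ∀ t : ℝ, 0 ≤ t →
      deriv (deriv ℓ) t ≤
        (C / 4) * (1 / (t + c₁) ^ ((3 : ℝ) / 2) + 1 / (t + c₂) ^ ((3 : ℝ) / 2)) := by
  intro t ht
  set g : ℝ → ℝ := fun s =>
    (Real.sqrt (s + c₁) + Real.sqrt (s + c₂) - C) *
      ((2 * Real.sqrt (s + c₁))⁻¹ + (2 * Real.sqrt (s + c₂))⁻¹) with hg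
  have sqrtder : ∀ c : ℝ, ∀ s : ℝ, 0 < s + c →
      HasDerivAt (fun u => Real.sqrt (u + c)) (1 / (2 * Real.sqrt (s + c))) s := by
    intro c s hs
    have := (Real.hasDerivAt_sqrt (x := s + c) (ne_of_gt hs)).comp s
      ((hasDerivAt_id s).add_const c)
    simpa [Function.comp_def] using this
  have key : ∀ s : ℝ, -c₁ < s → HasDerivAt ℓ (g s) s := by
    intro s hs
    have h1 : (0:ℝ) < s + c₁ := by linarith
    have h2 : (0:ℝ) < s + c₂ := by linarith
    have hf : HasDerivAt (fun u => Real.sqrt (u + c₁) + Real.sqrt (u + c₂) - C)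
        (1 / (2 * Real.sqrt (s + c₁)) + 1 / (2 * Real.sqrt (s + c₂))) s :=
      ((sqrtder c₁ s h1).add (sqrtder c₂ s h2)).sub_const C
    have := (hf.pow 2).const_mul (1/2 : ℝ)
    rw [hℓ]
    refine this.congr_deriv ?_
    simp [hg, one_div]
    ring
  have h1 : (0:ℝ) < t + c₁ := by linarith
  have h2 : (0:ℝ) < t + c₂ := by linarith
  have hev : deriv ℓ =ᶠ[nhds t] g := by
    filter_upwards [eventually_gt_nhds (show -c₁ < t by linarith)] with s hs
    exact (key s hs).deriv
  have hderiv2 : deriv (deriv ℓ) t = deriv g t := hev.deriv_eq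
  set a := Real.sqrt (t + c₁) with hadef
  set b := Real.sqrt (t + c₂) with hbdef
  have hapos : 0 < a := Real.sqrt_pos.mpr h1
  have hbpos : 0 < b := Real.sqrt_pos.mpr h2
  have hda : HasDerivAt (fun u => (2 * Real.sqrt (u + c₁))⁻¹)
      (-(2 * (1 / (2 * a))) / (2 * a) ^ 2) t :=
    ((sqrtder c₁ t h1).const_mul 2).inv (by positivity)
  have hdb : HasDerivAt (fun u => (2 * Real.sqrt (u + c₂))⁻¹)
      (-(2 * (1 / (2 * b))) / (2 * b) ^ 2) t :=
    ((sqrtder c₂ t h2).const_mul 2).inv (by positivity)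
  have hf : HasDerivAt (fun u => Real.sqrt (u + c₁) + Real.sqrt (u + c₂) - C)
      (1 / (2 * a) + 1 / (2 * b)) t :=
    ((sqrtder c₁ t h1).add (sqrtder c₂ t h2)).sub_const C
  have hgd : HasDerivAt g
      ((1 / (2 * a) + 1 / (2 * b)) * ((2 * a)⁻¹ + (2 * b)⁻¹) +
        (a + b - C) * (-(2 * (1 / (2 * a))) / (2 * a) ^ 2 +
          -(2 * (1 / (2 * b))) / (2 * b) ^ 2)) t := hf.mul (hda.add hdb)
  have hra : (t + c₁) ^ ((3:ℝ)/2) = a ^ 3 := by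
    rw [hadef, Real.sqrt_eq_rpow, ← Real.rpow_natCast ((t+c₁)^((1:ℝ)/2)) 3,
      ← Real.rpow_mul h1.le]
    norm_num
  have hrb : (t + c₂) ^ ((3:ℝ)/2) = b ^ 3 := by
    rw [hbdef, Real.sqrt_eq_rpow, ← Real.rpow_natCast ((t+c₂)^((1:ℝ)/2)) 3,
      ← Real.rpow_mul h2.le]
    norm_num
  rw [hderiv2, hgd.deriv, hra, hrb, ← sub_nonneg]
  have hane : a ≠ 0 := ne_of_gt hapos
  have hbne : b ≠ 0 := ne_of_gt hbpos
  have hkey : C / 4 * (1 / a ^ 3 + 1 / b ^ 3) -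
      ((1 / (2 * a) + 1 / (2 * b)) * ((2 * a)⁻¹ + (2 * b)⁻¹) +
        (a + b - C) * (-(2 * (1 / (2 * a))) / (2 * a) ^ 2 +
          -(2 * (1 / (2 * b))) / (2 * b) ^ 2)) =
      (a ^ 2 - b ^ 2) ^ 2 / (4 * a ^ 3 * b ^ 3) := by
    field_simp
    ring
  rw [hkey]
  positivity
end

section
/- Let ℓᵢ : [0,∞) → ℝ, i = 1,…,m, be continuous functions bounded below with ℓᵢ(t) → ∞ as t → ∞, and let aᵢ ∈ ℂⁿ with A the matrix having rows aᵢ*. Then for any z₀ ∈ ℂⁿ, the function z ↦ Σᵢ ℓᵢ(|⟨aᵢ,z⟩|²) restricted to z₀ + range(A*) has compact sublevel sets. -/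
open scoped InnerProductSpace

theorem stmt_7 (n m : ℕ) (a : Fin m → EuclideanSpace ℂ (Fin n))
    (A : EuclideanSpace ℂ (Fin n) →L[ℂ] EuclideanSpace ℂ (Fin m))
    (hA : ∀ z i, A z i = ⟪a i, z⟫_ℂ)
    (ℓ : Fin m → ℝ → ℝ)
    (hcont : ∀ i, ContinuousOn (ℓ i) (Set.Ici 0))
    (hbdd : ∀ i, ∃ b : ℝ, ∀ t : ℝ, 0 ≤ t → b ≤ ℓ i t)
    (hcoercive : ∀ i, Filter.Tendsto (ℓ i) Filter.atTop Filter.atTop)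
    (z₀ : EuclideanSpace ℂ (Fin n)) :
    ∀ s : ℝ, IsCompact {z : EuclideanSpace ℂ (Fin n) |
        z - z₀ ∈ (LinearMap.ker A.toLinearMap)ᗮ ∧ ∑ i, ℓ i (‖⟪a i, z⟫_ℂ‖ ^ 2) ≤ s} := by
  intro s
  set K : Submodule ℂ (EuclideanSpace ℂ (Fin n)) := (LinearMap.ker A.toLinearMap)ᗮ with hK
  -- continuity of each summand
  have hg : ∀ i : Fin m, Continuous fun z : EuclideanSpace ℂ (Fin n) => ‖⟪a i, z⟫_ℂ‖ ^ 2 :=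
    fun i => ((continuous_const.inner continuous_id).norm.pow 2)
  have hgnn : ∀ (i : Fin m) (z : EuclideanSpace ℂ (Fin n)), (0:ℝ) ≤ ‖⟪a i, z⟫_ℂ‖ ^ 2 :=
    fun i z => by positivity
  have hFi : ∀ i : Fin m, Continuous fun z : EuclideanSpace ℂ (Fin n) => ℓ i (‖⟪a i, z⟫_ℂ‖ ^ 2) :=
    fun i => (hcont i).comp_continuous (hg i) (fun z => hgnn i z)
  have hF : Continuous fun z : EuclideanSpace ℂ (Fin n) => ∑ i, ℓ i (‖⟪a i, z⟫_ℂ‖ ^ 2) :=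
    continuous_finset_sum _ fun i _ => hFi i
  -- closedness
  have hclosed : IsClosed {z : EuclideanSpace ℂ (Fin n) |
      z - z₀ ∈ K ∧ ∑ i, ℓ i (‖⟪a i, z⟫_ℂ‖ ^ 2) ≤ s} := by
    apply IsClosed.inter
    · exact (Submodule.closed_of_finiteDimensional K).preimage
        (continuous_id.sub continuous_const)
    · exact isClosed_le hF continuous_const
  -- antilipschitz constant for A restricted to K
  have hinj : LinearMap.ker (A.toLinearMap ∘ₗ K.subtype) = ⊥ := by
    rw [LinearMap.ker_eq_bot]
    intro w w' hww
    have h2 : (w : EuclideanSpace ℂ (Fin n)) - (w' : EuclideanSpace ℂ (Fin n)) ∈ LinearMap.ker A.toLinearMap := by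
      simp only [LinearMap.mem_ker, map_sub, sub_eq_zero]
      simpa using hww
    have h3 : (w : EuclideanSpace ℂ (Fin n)) - (w' : EuclideanSpace ℂ (Fin n)) ∈ K :=
      K.sub_mem w.2 w'.2
    have hz : (w : EuclideanSpace ℂ (Fin n)) - (w' : EuclideanSpace ℂ (Fin n)) = 0 := by
      have := (Submodule.orthogonal_disjoint (LinearMap.ker A.toLinearMap)).le_bot ⟨h2, h3⟩
      simpa using this
    exact Subtype.ext (sub_eq_zero.mp hz)
  obtain ⟨c, hc0, hc⟩ := (A.toLinearMap ∘ₗ K.subtype).exists_antilipschitzWith hinj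
  -- choose lower bounds
  choose b hb using hbdd
  -- choose coercivity thresholds
  have hT : ∀ i : Fin m, ∃ T : ℝ, ∀ t ≥ T,
      s - ∑ j ∈ Finset.univ.erase i, b j < ℓ i t := by
    intro i
    have := (hcoercive i).eventually_gt_atTop (s - ∑ j ∈ Finset.univ.erase i, b j)
    rcases Filter.eventually_atTop.mp this with ⟨T, hT⟩
    exact ⟨T, hT⟩
  choose T hTspec using hT
  -- bound on each |⟪a i, z⟫|² for z in the set
  have hxbound : ∀ z : EuclideanSpace ℂ (Fin n),
      (∑ i, ℓ i (‖⟪a i, z⟫_ℂ‖ ^ 2) ≤ s) → ∀ i, ‖⟪a i, z⟫_ℂ‖ ^ 2 ≤ max (T i) 0 := by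
    intro z hz i
    by_contra hcon
    push_neg at hcon
    have hTi : T i ≤ ‖⟪a i, z⟫_ℂ‖ ^ 2 := le_of_lt (lt_of_le_of_lt (le_max_left _ _) hcon)
    have hlt := hTspec i _ hTi
    have hsum : ℓ i (‖⟪a i, z⟫_ℂ‖ ^ 2) + ∑ j ∈ Finset.univ.erase i, b j ≤ s := by
      calc ℓ i (‖⟪a i, z⟫_ℂ‖ ^ 2) + ∑ j ∈ Finset.univ.erase i, b j
          ≤ ℓ i (‖⟪a i, z⟫_ℂ‖ ^ 2) + ∑ j ∈ Finset.univ.erase i, ℓ j (‖⟪a j, z⟫_ℂ‖ ^ 2) := by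
            gcongr with j hj
            exact hb j _ (hgnn j z)
        _ = ∑ j, ℓ j (‖⟪a j, z⟫_ℂ‖ ^ 2) := Finset.add_sum_erase Finset.univ (fun j => ℓ j (‖⟪a j, z⟫_ℂ‖ ^ 2)) (Finset.mem_univ i)
        _ ≤ s := hz
    linarith
  -- the set is bounded
  have hbound : ∀ z : EuclideanSpace ℂ (Fin n), z ∈ {z : EuclideanSpace ℂ (Fin n) |
      z - z₀ ∈ K ∧ ∑ i, ℓ i (‖⟪a i, z⟫_ℂ‖ ^ 2) ≤ s} →
      ‖z‖ ≤ ‖z₀‖ + c * (Real.sqrt (∑ i, max (T i) 0) + ‖A z₀‖) := by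
    rintro z ⟨hzK, hzs⟩
    have hAz : ‖A z‖ ≤ Real.sqrt (∑ i, max (T i) 0) := by
      rw [EuclideanSpace.norm_eq]
      apply Real.sqrt_le_sqrt
      apply Finset.sum_le_sum
      intro i _
      rw [hA]
      exact hxbound z hzs i
    set w : K := ⟨z - z₀, hzK⟩
    have hw : ‖w‖ ≤ c * ‖A (z - z₀)‖ := by
      have := hc.le_mul_dist w 0
      exact (by simpa [dist_eq_norm] using this : ‖w‖ ≤ c * ‖A (w : EuclideanSpace ℂ (Fin n))‖)
    have hAw : ‖A (z - z₀)‖ ≤ Real.sqrt (∑ i, max (T i) 0) + ‖A z₀‖ := by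
      rw [map_sub]
      calc ‖A z - A z₀‖ ≤ ‖A z‖ + ‖A z₀‖ := norm_sub_le _ _
        _ ≤ _ := by gcongr
    have hwz : ‖z‖ ≤ ‖z₀‖ + ‖w‖ := by
      have : z = z₀ + (z - z₀) := by abel
      calc ‖z‖ = ‖z₀ + (z - z₀)‖ := by rw [← this]
        _ ≤ ‖z₀‖ + ‖z - z₀‖ := norm_add_le _ _
        _ = ‖z₀‖ + ‖w‖ := rfl
    have : ‖w‖ ≤ c * (Real.sqrt (∑ i, max (T i) 0) + ‖A z₀‖) := by
      exact hw.trans (mul_le_mul_of_nonneg_left hAw c.2)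
    linarith
  apply Metric.isCompact_of_isClosed_isBounded hclosed
  rw [Metric.isBounded_iff_subset_closedBall 0]
  exact ⟨_, fun z hz => by simpa [Metric.mem_closedBall] using hbound z hz⟩
end

section
/- Let aᵢ ∈ ℂⁿ, yᵢ ≥ 0, ε > 0, and M the matrix with rows √(1 + yᵢ/(8ε))·aᵢ*. Then the Wirtinger Hessian of L(z) = Σᵢ (|⟨aᵢ,z⟩|² − yᵢ log(|⟨aᵢ,z⟩|² + ε)) satisfies (v,v̄)*∇²L(z)(v,v̄) ≤ ‖M‖²·‖(v,v̄)‖₂² for all z, v ∈ ℂⁿ. -/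
open scoped InnerProductSpace

private lemma keyineq (s b nn y ε : ℝ) (hs : 0 ≤ s) (hn : 0 ≤ nn) (hy : 0 ≤ y)
    (hε : 0 < ε) (hb : b ^ 2 ≤ s * nn) :
    2 * nn * (1 - y / (s + ε)) + 2 * b * (y * (2 * b) / (s + ε) ^ 2)
      ≤ 2 * (1 + y / (8 * ε)) * nn := by
  have hse : (0:ℝ) < s + ε := by linarith
  have e1 : 2 * nn * (1 - y / (s + ε)) + 2 * b * (y * (2 * b) / (s + ε) ^ 2)
      = 2 * nn + (4 * y * b ^ 2 - 2 * nn * y * (s + ε)) / (s + ε) ^ 2 := by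
    field_simp; ring
  have e2 : 2 * (1 + y / (8 * ε)) * nn = 2 * nn + y * nn / (4 * ε) := by
    field_simp; ring
  rw [e1, e2]
  have : (4 * y * b ^ 2 - 2 * nn * y * (s + ε)) / (s + ε) ^ 2 ≤ y * nn / (4 * ε) := by
    rw [div_le_div_iff₀ (by positivity) (by positivity)]
    nlinarith [mul_nonneg (mul_nonneg hy hn) (sq_nonneg (s - 3 * ε)),
      mul_nonneg (mul_nonneg hε.le hy) (sub_nonneg.2 hb)]
  linarith

private lemma normsq_expand (c d : ℂ) (t : ℝ) :
    ‖c + t * d‖ ^ 2 = ‖c‖ ^ 2 + (2 * ((starRingEnd ℂ c * d).re)) * t + ‖d‖ ^ 2 * t ^ 2 := by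
  simp only [Complex.sq_norm, Complex.normSq_apply, Complex.add_re,
    Complex.add_im, Complex.mul_re, Complex.mul_im, Complex.ofReal_re, Complex.ofReal_im,
    Complex.conj_re, Complex.conj_im]
  ring

/-- Uniform Hessian bound for the regularized Poisson log-likelihood loss (proof of Thm 4.1):
the Wirtinger Hessian quadratic form, realized as the second derivative at `0` of
`t ↦ L(z + t v)`, is bounded by `‖M‖²·‖(v,v̄)‖₂²` with `‖(v,v̄)‖₂² = 2‖v‖₂²`, where `M` is the
matrix (operator) with rows `√(1 + yᵢ/(8ε))·aᵢ*` and `‖M‖` its spectral norm. -/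
theorem stmt_18 (n m : ℕ) (a : Fin m → EuclideanSpace ℂ (Fin n))
    (y : Fin m → ℝ) (hy : ∀ i, 0 ≤ y i) (ε : ℝ) (hε : 0 < ε)
    (M : EuclideanSpace ℂ (Fin n) →L[ℂ] EuclideanSpace ℂ (Fin m))
    (hM : ∀ z i, M z i = Complex.ofReal (Real.sqrt (1 + y i / (8 * ε))) * ⟪a i, z⟫_ℂ)
    (L : EuclideanSpace ℂ (Fin n) → ℝ)
    (hL : L = fun z => ∑ i, (‖⟪a i, z⟫_ℂ‖ ^ 2 - y i * Real.log (‖⟪a i, z⟫_ℂ‖ ^ 2 + ε))) :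
    ∀ z v : EuclideanSpace ℂ (Fin n),
      iteratedDeriv 2 (fun t : ℝ => L (z + t • v)) 0 ≤ ‖M‖ ^ 2 * (2 * ‖v‖ ^ 2) := by
  intro z v
  classical
  set c : Fin m → ℂ := fun i => ⟪a i, z⟫_ℂ with hc
  set d : Fin m → ℂ := fun i => ⟪a i, v⟫_ℂ with hd
  set s : Fin m → ℝ := fun i => ‖c i‖ ^ 2 with hs
  set b : Fin m → ℝ := fun i => (starRingEnd ℂ (c i) * d i).re with hb
  set nn : Fin m → ℝ := fun i => ‖d i‖ ^ 2 with hnn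
  set P : Fin m → ℝ → ℝ := fun i t => s i + (2 * b i) * t + nn i * t ^ 2 with hP
  have hinner : ∀ (t : ℝ) i, ⟪a i, z + t • v⟫_ℂ = c i + t * d i := by
    intro t i
    rw [inner_add_right]
    congr 1
    rw [show (t : ℝ) • v = (t : ℂ) • v from (Complex.coe_smul t v).symm, inner_smul_right]
  have hPval : ∀ i (t : ℝ), P i t = ‖⟪a i, z + t • v⟫_ℂ‖ ^ 2 := by
    intro i t
    rw [hinner, normsq_expand]
  have hPpos : ∀ i (t : ℝ), 0 < P i t + ε := by
    intro i t
    rw [hPval]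
    positivity
  have hfun : (fun t : ℝ => L (z + t • v))
      = fun t => ∑ i, (P i t - y i * Real.log (P i t + ε)) := by
    funext t
    rw [hL]
    exact Finset.sum_congr rfl (fun i _ => by rw [hPval])
  rw [hfun]
  -- derivative of P
  have hP' : ∀ i (t : ℝ), HasDerivAt (P i) (2 * b i + 2 * nn i * t) t := by
    intro i t
    have h : HasDerivAt (fun t : ℝ => s i + (2 * b i) * t + nn i * t ^ 2)
        (0 + 2 * b i * 1 + nn i * (2 * t ^ 1)) t := by
      exact ((hasDerivAt_const t (s i)).add ((hasDerivAt_id t).const_mul (2 * b i))).add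
        ((hasDerivAt_pow 2 t).const_mul (nn i))
    convert h using 1
    simp; ring
  -- first derivative function
  set G' : ℝ → ℝ := fun t => ∑ i, (2 * b i + 2 * nn i * t) * (1 - y i / (P i t + ε)) with hG'
  have hG : ∀ t : ℝ, HasDerivAt (fun t => ∑ i, (P i t - y i * Real.log (P i t + ε))) (G' t) t := by
    intro t
    apply HasDerivAt.fun_sum
    intro i _
    have hp := hP' i t
    have hlog : HasDerivAt (fun u : ℝ => Real.log (P i u + ε))
        ((2 * b i + 2 * nn i * t) / (P i t + ε)) t :=
      (hp.add_const ε).log (hPpos i t).ne'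
    have h := hp.sub (hlog.const_mul (y i))
    refine h.congr_deriv ?_
    field_simp
  have hderiv1 : deriv (fun t => ∑ i, (P i t - y i * Real.log (P i t + ε))) = G' := by
    funext t
    exact (hG t).deriv
  -- second derivative at 0
  have hG'' : HasDerivAt G'
      (∑ i, (2 * nn i * (1 - y i / (s i + ε)) + 2 * b i * (y i * (2 * b i) / (s i + ε) ^ 2))) 0 := by
    apply HasDerivAt.fun_sum
    intro i _
    have hA : HasDerivAt (fun t : ℝ => 2 * b i + 2 * nn i * t) (2 * nn i) 0 := by
      have h : HasDerivAt (fun t : ℝ => 2 * b i + 2 * nn i * t) (0 + 2 * nn i * 1) 0 :=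
        (hasDerivAt_const 0 (2 * b i)).add ((hasDerivAt_id 0).const_mul (2 * nn i))
      simpa using h
    have hden : HasDerivAt (fun t : ℝ => P i t + ε) (2 * b i + 2 * nn i * 0) 0 :=
      (hP' i 0).add_const ε
    have hdiv : HasDerivAt (fun t : ℝ => y i / (P i t + ε))
        ((0 * (P i 0 + ε) - y i * (2 * b i + 2 * nn i * 0)) / (P i 0 + ε) ^ 2) 0 :=
      (hasDerivAt_const 0 (y i)).div hden (hPpos i 0).ne'
    have hB : HasDerivAt (fun t : ℝ => 1 - y i / (P i t + ε))
        (0 - (0 * (P i 0 + ε) - y i * (2 * b i + 2 * nn i * 0)) / (P i 0 + ε) ^ 2) 0 :=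
      (hasDerivAt_const 0 (1:ℝ)).sub hdiv
    have h := hA.mul hB
    refine h.congr_deriv ?_
    have hP0 : P i 0 = s i := by simp [hP]
    rw [hP0]
    ring
  have h2 : iteratedDeriv 2 (fun t => ∑ i, (P i t - y i * Real.log (P i t + ε))) 0
      = ∑ i, (2 * nn i * (1 - y i / (s i + ε)) + 2 * b i * (y i * (2 * b i) / (s i + ε) ^ 2)) := by
    rw [show (2:ℕ) = 1 + 1 from rfl, iteratedDeriv_succ, iteratedDeriv_one, hderiv1]
    exact hG''.deriv
  rw [h2]
  -- pointwise bound
  have hbd : ∀ i ∈ Finset.univ,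
      2 * nn i * (1 - y i / (s i + ε)) + 2 * b i * (y i * (2 * b i) / (s i + ε) ^ 2)
        ≤ 2 * (1 + y i / (8 * ε)) * nn i := by
    intro i _
    apply keyineq _ _ _ _ _ (by positivity) (by positivity) (hy i) hε
    have h1 : b i ^ 2 ≤ Complex.normSq (starRingEnd ℂ (c i) * d i) := by
      rw [Complex.normSq_apply]
      nlinarith [sq_nonneg ((starRingEnd ℂ (c i) * d i).im)]
    calc b i ^ 2 ≤ Complex.normSq (starRingEnd ℂ (c i) * d i) := h1
      _ = s i * nn i := by
          rw [Complex.normSq_mul, Complex.normSq_conj]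
          simp only [hs, hnn, Complex.normSq_eq_norm_sq]
  refine (Finset.sum_le_sum hbd).trans ?_
  -- sum equals 2 * ‖M v‖²
  have hMv : ∀ i, ‖(M v) i‖ ^ 2 = (1 + y i / (8 * ε)) * nn i := by
    intro i
    rw [hM]
    rw [norm_mul, mul_pow, Complex.norm_real, Real.norm_eq_abs, sq_abs, Real.sq_sqrt (by have := hy i; positivity)]
  have hsum : ∑ i, 2 * (1 + y i / (8 * ε)) * nn i = 2 * ‖M v‖ ^ 2 := by
    have hnorm : ‖M v‖ ^ 2 = ∑ i, ‖(M v) i‖ ^ 2 := by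
      rw [EuclideanSpace.norm_eq, Real.sq_sqrt (Finset.sum_nonneg fun i _ => sq_nonneg _)]
    rw [hnorm, Finset.mul_sum]
    exact Finset.sum_congr rfl fun i _ => by rw [hMv]; ring
  rw [hsum]
  have hop : ‖M v‖ ≤ ‖M‖ * ‖v‖ := M.le_opNorm v
  have : ‖M v‖ ^ 2 ≤ (‖M‖ * ‖v‖) ^ 2 := by
    exact pow_le_pow_left₀ (norm_nonneg _) hop 2
  nlinarith [norm_nonneg (M v), norm_nonneg M, norm_nonneg v]
end

section
/- Let 0 < c₁ ≤ c₂, C ≥ 0, A the matrix with rows aᵢ*, and L_avg(z) = Σᵢ ½(√(|⟨aᵢ,z⟩|² + c₁) + √(|⟨aᵢ,z⟩|² + c₂) − C)². Then for all z, v ∈ ℂⁿ, (v,v̄)*∇²L_avg(z)(v,v̄) ≤ ½(3 + √(c₂/c₁))·‖A‖²·‖(v,v̄)‖₂². -/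
open scoped InnerProductSpace

set_option maxHeartbeats 1000000 in
private lemma key_scalar (a b p q r C k : ℝ) (ha : 0 < a) (hab : a ≤ b) (hp : 0 ≤ p)
    (hpa : p ≤ a^2) (hr : 0 ≤ r) (hq : q^2 ≤ 4*p*r) (hC : 0 ≤ C) (hk : b ≤ k*a) :
    (q/(2*a)+q/(2*b))^2 + (a+b-C)*(r/a - q^2/(4*a^3) + r/b - q^2/(4*b^3)) ≤ (3+k)*r := by
  have hb : 0 < b := ha.trans_le hab
  have hk1 : 1 ≤ k := by nlinarith
  have hq0 : 0 ≤ q^2 := sq_nonneg q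
  have ha2b2 : a^2 ≤ b^2 := by nlinarith
  have hrw : (q/(2*a)+q/(2*b))^2 + (a+b-C)*(r/a - q^2/(4*a^3) + r/b - q^2/(4*b^3))
      = (q^2*(a+b)^2*a*b + (a+b-C)*(4*r*(a+b)*a^2*b^2 - q^2*(b^3+a^3))) / (4*a^3*b^3) := by
    field_simp
    ring
  rw [hrw, div_le_iff₀ (by positivity)]
  have e1 : a^4*b^2 ≤ a^3*b^3 := by nlinarith [mul_pos (mul_pos (mul_pos ha ha) ha) (mul_pos hb hb)]
  have e2 : a^2*b^4 ≤ k*(a^3*b^3) := by nlinarith [mul_pos (mul_pos ha ha) (mul_pos (mul_pos hb hb) hb)]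
  have L1 : (a+b)^2*a^2*b^2 ≤ (3+k)*a^3*b^3 := by nlinarith [e1, e2]
  have L1r : 4*r*((a+b)^2*a^2*b^2) ≤ 4*r*((3+k)*a^3*b^3) :=
    mul_le_mul_of_nonneg_left L1 (by linarith)
  have haab : a^3 ≤ a*b^2 := by nlinarith [mul_le_mul_of_nonneg_left ha2b2 ha.le]
  have hpq : p*(b^3+a^3) ≤ (a+b)*a^2*b^2 := by
    nlinarith [mul_le_mul_of_nonneg_right hpa (by positivity : (0:ℝ) ≤ b^3+a^3),
      mul_le_mul_of_nonneg_left haab (by positivity : (0:ℝ) ≤ a^2)]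
  have hbr : 4*p*r*(b^3+a^3) ≤ 4*r*((a+b)*a^2*b^2) := by
    nlinarith [mul_le_mul_of_nonneg_left hpq (by linarith : (0:ℝ) ≤ 4*r)]
  have hqb : q^2*(b^3+a^3) ≤ 4*r*((a+b)*a^2*b^2) :=
    le_trans (mul_le_mul_of_nonneg_right hq (by positivity : (0:ℝ) ≤ b^3+a^3)) hbr
  rcases le_or_gt (a+b-C) 0 with hu | hu
  · have h1 : q^2*((a+b)^2*a*b) ≤ 4*p*r*((a+b)^2*a*b) :=
      mul_le_mul_of_nonneg_right hq (by positivity)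
    have h1' : p*(4*r*((a+b)^2*a*b)) ≤ a^2*(4*r*((a+b)^2*a*b)) :=
      mul_le_mul_of_nonneg_right hpa (by positivity)
    have h1'' : a*(4*r*((a+b)^2*a^2*b)) ≤ b*(4*r*((a+b)^2*a^2*b)) :=
      mul_le_mul_of_nonneg_right hab (by positivity)
    have h2 : (a+b-C)*(4*r*(a+b)*a^2*b^2 - q^2*(b^3+a^3)) ≤ 0 :=
      mul_nonpos_of_nonpos_of_nonneg hu (by linarith)
    nlinarith [h1, h1', h1'', h2, L1r]
  · have huab : a+b-C ≤ a+b := by linarith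
    have L2 : 4*p*r*(a+b)^2*a*b + (a+b)*(4*r*(a+b)*a^2*b^2 - 4*p*r*(b^3+a^3))
        ≤ (3+k)*r*(4*a^3*b^3) := by
      have h3 : 0 ≤ 4*r*p*((a+b)^2*(a-b)^2) := by positivity
      nlinarith [L1r, h3]
    rcases le_or_gt 0 ((a+b)^2*a*b - (a+b-C)*(b^3+a^3)) with hc0 | hc0
    · have h4 : q^2*((a+b)^2*a*b - (a+b-C)*(b^3+a^3)) ≤ 4*p*r*((a+b)^2*a*b - (a+b-C)*(b^3+a^3)) :=
        mul_le_mul_of_nonneg_right hq hc0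
      have h5 : (a+b-C)*(4*r*(a+b)*a^2*b^2 - 4*p*r*(b^3+a^3))
          ≤ (a+b)*(4*r*(a+b)*a^2*b^2 - 4*p*r*(b^3+a^3)) :=
        mul_le_mul_of_nonneg_right huab (by linarith)
      nlinarith [h4, h5, L2]
    · have h4 : q^2*((a+b)^2*a*b - (a+b-C)*(b^3+a^3)) ≤ 0 :=
        mul_nonpos_of_nonneg_of_nonpos hq0 hc0.le
      have h5 : (a+b-C)*(4*r*(a+b)*a^2*b^2) ≤ (a+b)*(4*r*(a+b)*a^2*b^2) :=
        mul_le_mul_of_nonneg_right huab (by positivity)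
      nlinarith [h4, h5, L1r]

private lemma quad_hasDerivAt (p q r : ℝ) (t : ℝ) :
    HasDerivAt (fun t : ℝ => p + q*t + r*t^2) (q + 2*r*t) t := by
  have h : HasDerivAt (fun t : ℝ => p + q*t + r*t^2) (0 + q*1 + r*(2*t^1)) t :=
    ((hasDerivAt_const t p).add ((hasDerivAt_id t).const_mul q)).add
      ((hasDerivAt_pow 2 t).const_mul r)
  convert h using 1
  ring

private lemma sqrt_term_hasDerivAt (p q r c : ℝ) (hc : 0 < c)
    (hnn : ∀ t : ℝ, 0 ≤ p + q*t + r*t^2) (t : ℝ) :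
    HasDerivAt (fun t : ℝ => Real.sqrt (p + q*t + r*t^2 + c))
      ((q + 2*r*t)/(2*Real.sqrt (p + q*t + r*t^2 + c))) t := by
  have hpos : 0 < p + q*t + r*t^2 + c := by have := hnn t; linarith
  exact ((quad_hasDerivAt p q r t).add_const c).sqrt (ne_of_gt hpos)

private lemma term_hasDerivAt (p q r c₁ c₂ C : ℝ) (hc₁ : 0 < c₁) (hc₂ : 0 < c₂)
    (hnn : ∀ t : ℝ, 0 ≤ p + q*t + r*t^2) (t : ℝ) :
    HasDerivAt (fun t : ℝ => (1/2)*(Real.sqrt (p + q*t + r*t^2 + c₁)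
        + Real.sqrt (p + q*t + r*t^2 + c₂) - C)^2)
      ((Real.sqrt (p + q*t + r*t^2 + c₁) + Real.sqrt (p + q*t + r*t^2 + c₂) - C) *
        ((q + 2*r*t)/(2*Real.sqrt (p + q*t + r*t^2 + c₁))
          + (q + 2*r*t)/(2*Real.sqrt (p + q*t + r*t^2 + c₂)))) t := by
  have hu : HasDerivAt (fun t : ℝ => Real.sqrt (p + q*t + r*t^2 + c₁)
      + Real.sqrt (p + q*t + r*t^2 + c₂) - C)
      ((q + 2*r*t)/(2*Real.sqrt (p + q*t + r*t^2 + c₁))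
        + (q + 2*r*t)/(2*Real.sqrt (p + q*t + r*t^2 + c₂))) t :=
    ((sqrt_term_hasDerivAt p q r c₁ hc₁ hnn t).add
      (sqrt_term_hasDerivAt p q r c₂ hc₂ hnn t)).sub_const C
  have h := (hu.pow 2).const_mul (1/2 : ℝ)
  refine h.congr_deriv ?_
  push_cast
  ring

private lemma delta_hasDerivAt (p q r c : ℝ) (hc : 0 < c)
    (hnn : ∀ t : ℝ, 0 ≤ p + q*t + r*t^2) :
    HasDerivAt (fun t : ℝ => (q + 2*r*t)/(2*Real.sqrt (p + q*t + r*t^2 + c)))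
      (r/Real.sqrt (p + c) - q^2/(4*Real.sqrt (p + c)^3)) 0 := by
  have hpos : 0 < p + c := by have := hnn 0; nlinarith
  have hs : 0 < Real.sqrt (p + c) := Real.sqrt_pos.mpr hpos
  have hN : HasDerivAt (fun t : ℝ => q + 2*r*t) (2*r) 0 := by
    have h := ((hasDerivAt_id (0:ℝ)).const_mul (2*r)).const_add q
    refine h.congr_deriv ?_; ring
  have hD : HasDerivAt (fun t : ℝ => 2*Real.sqrt (p + q*t + r*t^2 + c))
      (2*((q + 2*r*0)/(2*Real.sqrt (p + q*0 + r*0^2 + c)))) 0 :=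
    (sqrt_term_hasDerivAt p q r c hc hnn 0).const_mul 2
  have hne : (2*Real.sqrt (p + q*0 + r*0^2 + c)) ≠ 0 := by
    norm_num; positivity
  have h := hN.div hD hne
  have h0 : p + q*0 + r*0^2 + c = p + c := by ring
  rw [h0] at h
  refine h.congr_deriv ?_
  norm_num
  field_simp
  ring

private lemma term2_hasDerivAt (p q r c₁ c₂ C : ℝ) (hc₁ : 0 < c₁) (hc₂ : 0 < c₂)
    (hnn : ∀ t : ℝ, 0 ≤ p + q*t + r*t^2) :
    HasDerivAt (fun t : ℝ => (Real.sqrt (p + q*t + r*t^2 + c₁)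
        + Real.sqrt (p + q*t + r*t^2 + c₂) - C) *
        ((q + 2*r*t)/(2*Real.sqrt (p + q*t + r*t^2 + c₁))
          + (q + 2*r*t)/(2*Real.sqrt (p + q*t + r*t^2 + c₂))))
      ((q/(2*Real.sqrt (p + c₁)) + q/(2*Real.sqrt (p + c₂)))^2
        + (Real.sqrt (p + c₁) + Real.sqrt (p + c₂) - C) *
          (r/Real.sqrt (p + c₁) - q^2/(4*Real.sqrt (p + c₁)^3)
            + r/Real.sqrt (p + c₂) - q^2/(4*Real.sqrt (p + c₂)^3))) 0 := by
  have hu : HasDerivAt (fun t : ℝ => Real.sqrt (p + q*t + r*t^2 + c₁)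
      + Real.sqrt (p + q*t + r*t^2 + c₂) - C)
      ((q + 2*r*0)/(2*Real.sqrt (p + q*0 + r*0^2 + c₁))
        + (q + 2*r*0)/(2*Real.sqrt (p + q*0 + r*0^2 + c₂))) 0 :=
    ((sqrt_term_hasDerivAt p q r c₁ hc₁ hnn 0).add
      (sqrt_term_hasDerivAt p q r c₂ hc₂ hnn 0)).sub_const C
  have hw : HasDerivAt (fun t : ℝ => (q + 2*r*t)/(2*Real.sqrt (p + q*t + r*t^2 + c₁))
      + (q + 2*r*t)/(2*Real.sqrt (p + q*t + r*t^2 + c₂)))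
      ((r/Real.sqrt (p + c₁) - q^2/(4*Real.sqrt (p + c₁)^3))
        + (r/Real.sqrt (p + c₂) - q^2/(4*Real.sqrt (p + c₂)^3))) 0 :=
    (delta_hasDerivAt p q r c₁ hc₁ hnn).add (delta_hasDerivAt p q r c₂ hc₂ hnn)
  have h := hu.mul hw
  have h0 : p + q*0 + r*0^2 = p := by ring
  refine h.congr_deriv ?_ <;> rw [h0] <;> norm_num <;> ring

private lemma cx_expand (α β : ℂ) (t : ℝ) :
    ‖α + (t:ℂ)*β‖^2 = ‖α‖^2 + (2*(α * (starRingEnd ℂ) β).re)*t + ‖β‖^2*t^2 := by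
  rw [Complex.sq_norm, Complex.sq_norm, Complex.sq_norm, Complex.normSq_add,
    Complex.normSq_mul, Complex.normSq_ofReal]
  simp [map_mul, Complex.conj_ofReal, Complex.mul_re, Complex.mul_im]
  ring

private lemma cx_q_sq (α β : ℂ) : (2*(α * (starRingEnd ℂ) β).re)^2 ≤ 4 * ‖α‖^2 * ‖β‖^2 := by
  have h1 : |(α * (starRingEnd ℂ) β).re| ≤ ‖α * (starRingEnd ℂ) β‖ := Complex.abs_re_le_norm _
  have h2 : ‖α * (starRingEnd ℂ) β‖ = ‖α‖ * ‖β‖ := by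
    rw [norm_mul, RCLike.norm_conj]
  nlinarith [sq_nonneg ((α * (starRingEnd ℂ) β).re), abs_nonneg ((α * (starRingEnd ℂ) β).re),
    norm_nonneg α, norm_nonneg β, sq_abs ((α * (starRingEnd ℂ) β).re)]

/-- Uniform Hessian bound for the averaging variance-stabilization loss (proof of Thm 4.2):
the Wirtinger Hessian quadratic form, realized as the second derivative at `0` of
`t ↦ L_avg(z + t v)`, is bounded by `½(3 + √(c₂/c₁))·‖A‖²·‖(v,v̄)‖₂²` with
`‖(v,v̄)‖₂² = 2‖v‖₂²`, where `A` is the matrix (operator) with rows `aᵢ*` and `‖A‖` its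
spectral norm. -/
theorem stmt_19 (n m : ℕ) (a : Fin m → EuclideanSpace ℂ (Fin n))
    (c₁ c₂ C : ℝ) (hc₁ : 0 < c₁) (hc₂ : c₁ ≤ c₂) (hC : 0 ≤ C)
    (A : EuclideanSpace ℂ (Fin n) →L[ℂ] EuclideanSpace ℂ (Fin m))
    (hA : ∀ z i, A z i = ⟪a i, z⟫_ℂ)
    (Lavg : EuclideanSpace ℂ (Fin n) → ℝ)
    (hLavg : Lavg = fun z => ∑ i, (1 / 2) *
      (Real.sqrt (‖⟪a i, z⟫_ℂ‖ ^ 2 + c₁) + Real.sqrt (‖⟪a i, z⟫_ℂ‖ ^ 2 + c₂) - C) ^ 2) :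
    ∀ z v : EuclideanSpace ℂ (Fin n),
      iteratedDeriv 2 (fun t : ℝ => Lavg (z + t • v)) 0 ≤
        (1 / 2) * (3 + Real.sqrt (c₂ / c₁)) * ‖A‖ ^ 2 * (2 * ‖v‖ ^ 2) := by
  intro z v
  have hc₂0 : 0 < c₂ := lt_of_lt_of_le hc₁ hc₂
  set k : ℝ := Real.sqrt (c₂ / c₁) with hkdef
  set α : Fin m → ℂ := fun i => ⟪a i, z⟫_ℂ with hαdef
  set β : Fin m → ℂ := fun i => ⟪a i, v⟫_ℂ with hβdef
  set p : Fin m → ℝ := fun i => ‖α i‖^2 with hpdef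
  set q : Fin m → ℝ := fun i => 2*(α i * (starRingEnd ℂ) (β i)).re with hqdef
  set r : Fin m → ℝ := fun i => ‖β i‖^2 with hrdef
  have hnorm : ∀ (i : Fin m) (t : ℝ),
      ‖⟪a i, z + t • v⟫_ℂ‖^2 = p i + q i * t + r i * t^2 := by
    intro i t
    have h1 : ⟪a i, z + t • v⟫_ℂ = α i + (t:ℂ) * β i := by
      rw [hαdef, hβdef]
      rw [inner_add_right, ← Complex.coe_smul, inner_smul_right]
    rw [h1, cx_expand]
  have hnn : ∀ (i : Fin m) (t : ℝ), 0 ≤ p i + q i * t + r i * t^2 := by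
    intro i t
    rw [← hnorm i t]
    positivity
  have hfun : (fun t : ℝ => Lavg (z + t • v)) = fun t : ℝ => ∑ i,
      (1/2)*(Real.sqrt (p i + q i*t + r i*t^2 + c₁)
        + Real.sqrt (p i + q i*t + r i*t^2 + c₂) - C)^2 := by
    funext t
    rw [hLavg]
    exact Finset.sum_congr rfl fun i _ => by rw [hnorm i t]
  rw [hfun, iteratedDeriv_succ, iteratedDeriv_one]
  have hd1 : deriv (fun t : ℝ => ∑ i,
      (1/2)*(Real.sqrt (p i + q i*t + r i*t^2 + c₁)
        + Real.sqrt (p i + q i*t + r i*t^2 + c₂) - C)^2)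
      = fun t : ℝ => ∑ i, (Real.sqrt (p i + q i*t + r i*t^2 + c₁)
          + Real.sqrt (p i + q i*t + r i*t^2 + c₂) - C) *
        ((q i + 2*r i*t)/(2*Real.sqrt (p i + q i*t + r i*t^2 + c₁))
          + (q i + 2*r i*t)/(2*Real.sqrt (p i + q i*t + r i*t^2 + c₂))) := by
    funext t
    exact (HasDerivAt.fun_sum fun i _ =>
      term_hasDerivAt (p i) (q i) (r i) c₁ c₂ C hc₁ hc₂0 (hnn i) t).deriv
  rw [hd1]
  have hd2 : deriv (fun t : ℝ => ∑ i, (Real.sqrt (p i + q i*t + r i*t^2 + c₁)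
          + Real.sqrt (p i + q i*t + r i*t^2 + c₂) - C) *
        ((q i + 2*r i*t)/(2*Real.sqrt (p i + q i*t + r i*t^2 + c₁))
          + (q i + 2*r i*t)/(2*Real.sqrt (p i + q i*t + r i*t^2 + c₂)))) 0
      = ∑ i, ((q i/(2*Real.sqrt (p i + c₁)) + q i/(2*Real.sqrt (p i + c₂)))^2
        + (Real.sqrt (p i + c₁) + Real.sqrt (p i + c₂) - C) *
          (r i/Real.sqrt (p i + c₁) - q i^2/(4*Real.sqrt (p i + c₁)^3)
            + r i/Real.sqrt (p i + c₂) - q i^2/(4*Real.sqrt (p i + c₂)^3))) :=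
    (HasDerivAt.fun_sum fun i _ =>
      term2_hasDerivAt (p i) (q i) (r i) c₁ c₂ C hc₁ hc₂0 (hnn i)).deriv
  rw [hd2]
  have hk0 : 0 ≤ k := Real.sqrt_nonneg _
  have hsum : ∑ i, ((q i/(2*Real.sqrt (p i + c₁)) + q i/(2*Real.sqrt (p i + c₂)))^2
        + (Real.sqrt (p i + c₁) + Real.sqrt (p i + c₂) - C) *
          (r i/Real.sqrt (p i + c₁) - q i^2/(4*Real.sqrt (p i + c₁)^3)
            + r i/Real.sqrt (p i + c₂) - q i^2/(4*Real.sqrt (p i + c₂)^3)))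
      ≤ ∑ i, (3+k)*r i := by
    refine Finset.sum_le_sum fun i _ => ?_
    have hp0 : 0 ≤ p i := by rw [hpdef]; positivity
    have hr0 : 0 ≤ r i := by rw [hrdef]; positivity
    have hpc₁ : 0 < p i + c₁ := by linarith
    have hpc₂ : 0 < p i + c₂ := by linarith
    have ha : 0 < Real.sqrt (p i + c₁) := Real.sqrt_pos.mpr hpc₁
    have hab : Real.sqrt (p i + c₁) ≤ Real.sqrt (p i + c₂) :=
      Real.sqrt_le_sqrt (by linarith)
    have hpa : p i ≤ Real.sqrt (p i + c₁)^2 := by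
      rw [Real.sq_sqrt hpc₁.le]; linarith
    have hq2 : (q i)^2 ≤ 4 * p i * r i := cx_q_sq (α i) (β i)
    have hkb : Real.sqrt (p i + c₂) ≤ k * Real.sqrt (p i + c₁) := by
      rw [hkdef, ← Real.sqrt_mul (by positivity) (p i + c₁)]
      apply Real.sqrt_le_sqrt
      rw [div_mul_eq_mul_div, le_div_iff₀ hc₁]
      nlinarith
    exact key_scalar (Real.sqrt (p i + c₁)) (Real.sqrt (p i + c₂)) (p i) (q i) (r i) C k
      ha hab hp0 hpa hr0 hq2 hC hkb
  have hr_sum : ∑ i, r i = ‖A v‖^2 := by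
    rw [EuclideanSpace.norm_eq, Real.sq_sqrt (by positivity)]
    refine Finset.sum_congr rfl fun i _ => ?_
    rw [hrdef, hβdef]
    simp only [hA v i]
  have hAv : ‖A v‖^2 ≤ ‖A‖^2 * ‖v‖^2 := by
    have h := A.le_opNorm v
    nlinarith [norm_nonneg (A v), norm_nonneg v, A.opNorm_nonneg]
  calc ∑ i, ((q i/(2*Real.sqrt (p i + c₁)) + q i/(2*Real.sqrt (p i + c₂)))^2
        + (Real.sqrt (p i + c₁) + Real.sqrt (p i + c₂) - C) *
          (r i/Real.sqrt (p i + c₁) - q i^2/(4*Real.sqrt (p i + c₁)^3)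
            + r i/Real.sqrt (p i + c₂) - q i^2/(4*Real.sqrt (p i + c₂)^3)))
      ≤ ∑ i, (3+k)*r i := hsum
    _ = (3+k) * ∑ i, r i := by rw [Finset.mul_sum]
    _ = (3+k) * ‖A v‖^2 := by rw [hr_sum]
    _ ≤ (3+k) * (‖A‖^2 * ‖v‖^2) := by nlinarith [hAv, hk0]
    _ = (1/2) * (3+k) * ‖A‖^2 * (2*‖v‖^2) := by ring
end
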